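/- Let G be an edge-biconnected (bridgeless connected) multigraph, and let G' be obtained by splitting a vertex v into v, v' (distributing incident edge-ends arbitrarily) such that the result before adding the new edge is still connected, and then adding one new edge between v and v'. Then G' is edge-biconnected. -/

import Mathlib

structure Multigraph (V : Type) (E : Type) where
  ends : E → Sym2 V

namespace Multigraph

variable {V E V' E' : Type}

/-- Two vertices are adjacent if some edge joins them. -/
def Adj (G : Multigraph V E) (u v : V) : Prop := ∃ e : E, G.ends e = s(u, v)

/-- Reachability: joined by a path (reflexive-transitive closure of adjacency). -/
def Reachable (G : Multigraph V E) : V → V → Prop := Relation.ReflTransGen G.Adj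

/-- A multigraph is connected if every pair of vertices is joined by a path. -/
def Connected (G : Multigraph V E) : Prop := ∀ u v : V, G.Reachable u v

/-- Number of connected components. -/
noncomputable def numComponents (G : Multigraph V E) : ℕ := Nat.card (Quot G.Reachable)

/-- Add a new edge with given pair of endpoints; the new edge is `none`. -/
def addEdge (G : Multigraph V E) (p : Sym2 V) : Multigraph V (Option E) :=
  ⟨fun e => e.elim p G.ends⟩

/-- Delete the edge `e`. -/
def deleteEdge (G : Multigraph V E) (e : E) : Multigraph V {f : E // f ≠ e} :=
  ⟨fun f => G.ends f.1⟩

/-- An edge of a connected multigraph is a bridge if its removal disconnects the graph. -/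
def IsBridge (G : Multigraph V E) (e : E) : Prop := ¬ (G.deleteEdge e).Connected

/-- Edge-biconnected: connected and with no bridge. -/
def Biconnected (G : Multigraph V E) : Prop := G.Connected ∧ ∀ e : E, ¬ G.IsBridge e

/-- A multigraph is simple if it has no loops and no multiple edges. -/
def Simple (G : Multigraph V E) : Prop :=
  (∀ e : E, ¬ (G.ends e).IsDiag) ∧ ∀ e f : E, G.ends e = G.ends f → e = f

/-- `f`, `g` describe a cycle: a closed walk with distinct vertices and distinct edges.
A loop gives a cycle of length one, a pair of parallel edges a cycle of length two. -/
def IsCycleOn (G : Multigraph V E) (n : ℕ) (f : ZMod n → V) (g : ZMod n → E) : Prop :=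
  0 < n ∧ Function.Injective f ∧ Function.Injective g ∧
    ∀ i : ZMod n, G.ends (g i) = s(f i, f (i + 1))

/-- `C` is the edge set of a cycle of `G`. -/
def IsCycleEdgeSet (G : Multigraph V E) (C : Set E) : Prop :=
  ∃ (n : ℕ) (f : ZMod n → V) (g : ZMod n → E), G.IsCycleOn n f g ∧ C = Set.range g

def HasCycle (G : Multigraph V E) : Prop := ∃ C : Set E, G.IsCycleEdgeSet C

/-- A tree is a connected multigraph with no cycles. -/
def IsTree (G : Multigraph V E) : Prop := G.Connected ∧ ¬ G.HasCycle

/-- The cycle space: the span over `ZMod 2` of the indicator vectors of edge sets of cycles,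
inside the space of subsets of `E` with symmetric difference (i.e. `E → ZMod 2`). -/
noncomputable def cycleSpace (G : Multigraph V E) : Submodule (ZMod 2) (E → ZMod 2) :=
  Submodule.span (ZMod 2)
    { x | ∃ C : Set E, G.IsCycleEdgeSet C ∧ x = C.indicator (fun _ => (1 : ZMod 2)) }

/-- When splitting the vertex `v` into `some v` and `none`, an edge-end at `u : V`
may be reassigned to `w : Option V` exactly when this holds. -/
def SplitEnd (v u : V) (w : Option V) : Prop :=
  (u = v ∧ (w = some v ∨ w = none)) ∨ (u ≠ v ∧ w = some u)

/-- `H` is obtained from `G` by splitting the vertex `v` into two vertices `some v` and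
`none`, distributing the edge-ends formerly incident to `v` between the two in some way
(no new edge added yet). -/
def IsSplitAssign (G : Multigraph V E) (v : V) (H : Multigraph (Option V) E) : Prop :=
  ∀ e : E, ∃ (a b : V) (a' b' : Option V),
    G.ends e = s(a, b) ∧ H.ends e = s(a', b') ∧ SplitEnd v a a' ∧ SplitEnd v b b'

/-- `G'` is obtained from `G` by splitting the vertex `v` in two, distributing the
edge-ends incident to `v` between the two new vertices in some way, and adding one
new edge joining the two new vertices. -/
def IsSplitAt (G : Multigraph V E) (v : V) (G' : Multigraph (Option V) (Option E)) : Prop :=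
  ∃ H : Multigraph (Option V) E, G.IsSplitAssign v H ∧ G' = H.addEdge s(some v, none)

/-- Contract the non-loop edge `e` with endpoints `u ≠ v`: delete `e` and identify
`v` with `u`, keeping all other edges. -/
def contract [DecidableEq V] (G : Multigraph V E) (e : E) (u v : V) (huv : u ≠ v) :
    Multigraph {x : V // x ≠ v} {f : E // f ≠ e} :=
  ⟨fun f => (G.ends f.1).map (fun x => if h : x = v then ⟨u, huv⟩ else ⟨x, h⟩)⟩

/-- Isomorphism of multigraphs: bijections of vertices and of edges compatible with
the incidence maps. -/
def IsIsomorphic (G : Multigraph V E) (H : Multigraph V' E') : Prop :=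
  ∃ (σ : V ≃ V') (τ : E ≃ E'), ∀ e : E, H.ends (τ e) = (G.ends e).map σ

end Multigraph

/-- Splitting a vertex of an edge-biconnected multigraph such that the result before
adding the new edge is still connected, then adding one new edge between the two new
vertices, yields an edge-biconnected multigraph. -/
theorem split_biconnected (V E : Type) [Fintype V] [Fintype E] (G : Multigraph V E)
    (hG : G.Biconnected) (v : V) (H : Multigraph (Option V) E)
    (hH : G.IsSplitAssign v H) (hconn : H.Connected) :
    (H.addEdge s(some v, none)).Biconnected := by
  classical
  set G' := H.addEdge s(some v, none) with hG'def
  constructor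
  · intro x y
    refine Relation.ReflTransGen.mono ?_ _ _ (hconn x y)
    rintro a b ⟨f, hf⟩
    exact ⟨some f, hf⟩
  intro e' hbr
  apply hbr
  match e' with
  | none =>
    intro x y
    refine Relation.ReflTransGen.mono ?_ _ _ (hconn x y)
    rintro a b ⟨f, hf⟩
    exact ⟨⟨some f, by simp⟩, hf⟩
  | some e =>
    set D := G'.deleteEdge (some e) with hDdef
    have hsymm : ∀ x y : Option V, D.Adj x y → D.Adj y x := by
      rintro x y ⟨f, hf⟩
      exact ⟨f, by rw [hf, Sym2.eq_swap]⟩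
    have hreachsymm : ∀ x y : Option V, D.Reachable x y → D.Reachable y x := by
      intro x y h
      induction h with
      | refl => exact .refl
      | tail _ hadj ih => exact (Relation.ReflTransGen.single (hsymm _ _ hadj)).trans ih
    have hnew : D.Adj (some v) none := ⟨⟨none, by simp⟩, rfl⟩
    have hse : ∀ (a : V) (a' : Option V), Multigraph.SplitEnd v a a' →
        D.Reachable (some a) a' := by
      rintro a a' (⟨rfl, rfl | rfl⟩ | ⟨-, rfl⟩)
      · exact .refl
      · exact Relation.ReflTransGen.single hnew
      · exact .refl
    have hstep : ∀ (f : {f : E // f ≠ e}) (a b : V), G.ends f.1 = s(a, b) →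
        D.Reachable (some a) (some b) := by
      intro f a b hab
      obtain ⟨c, d, c', d', hcd, hcd', hc, hd⟩ := hH f.1
      have hadj : D.Adj c' d' := ⟨⟨some f.1, by simpa using f.2⟩, hcd'⟩
      have key : D.Reachable (some c) (some d) :=
        ((hse c c' hc).trans (Relation.ReflTransGen.single hadj)).trans
          (hreachsymm _ _ (hse d d' hd))
      rcases Sym2.eq_iff.mp (hcd.symm.trans hab) with ⟨rfl, rfl⟩ | ⟨rfl, rfl⟩
      · exact key
      · exact hreachsymm _ _ key
    have hdel : (G.deleteEdge e).Connected := not_not.mp (hG.2 e)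
    have hmap : ∀ u w : V, (G.deleteEdge e).Reachable u w →
        D.Reachable (some u) (some w) := by
      intro u w h
      induction h with
      | refl => exact .refl
      | tail _ hadj ih =>
        obtain ⟨f, hf⟩ := hadj
        exact ih.trans (hstep f _ _ hf)
    have hlift : ∀ x : Option V, D.Reachable (some (x.getD v)) x := by
      intro x
      cases x with
      | some u => exact .refl
      | none => exact Relation.ReflTransGen.single hnew
    intro x y
    exact (hreachsymm _ _ (hlift x)).trans
      ((hmap _ _ (hdel (x.getD v) (y.getD v))).trans (hlift y))
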